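/- arXiv:1911.00243 — 5 statements merged into one kernel-verified Lean document; each statement's English description precedes it below -/
import Mathlib

section
/- Fix q₀ ∈ ℝ with 0 < q₀ < 1 and set q(t) = q₀^t for t ∈ (0,1]. Then (q(t) − 1)·ℓ_{q(t)}(Q) converges, as t → 0⁺, to the principal branch log(Q) of the complex logarithm, uniformly on every compact subset of ℂ∖ℝ_{≤0}. (For real q ∈ (0,1) the q-logarithm ℓ_q is well defined on ℂ∖ℝ_{≤0}, since the zeros of θ_q all lie on the negative real axis.) -/
open Complex Filter Real

/-- Jacobi's theta function `θ_q(Q) = Σ_{d ∈ ℤ} q^{d(d-1)/2} Q^d`. -/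
noncomputable def theta (q Q : ℂ) : ℂ :=
  ∑' d : ℤ, q ^ (d * (d - 1) / 2).toNat * Q ^ d

/-- The q-logarithm `ℓ_q(Q) = -Q·θ_q′(Q)/θ_q(Q)`. -/
noncomputable def ellq (q Q : ℂ) : ℂ :=
  -Q * deriv (theta q) Q / theta q Q

lemma div2_nonneg (n : ℤ) : 0 ≤ n * (n - 1) / 2 := by
  apply Int.ediv_nonneg _ (by norm_num)
  rcases le_or_gt n 0 with h | h
  · nlinarith
  · nlinarith [Int.add_one_le_iff.mpr h]

lemma theta_eq (u : ℝ) {Q : ℂ} (hQ : Q ≠ 0) :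
    theta (rexp u) Q =
      jacobiTheta₂ ((Complex.log Q - u / 2) / (2 * π * I)) (((-u / (2 * π) : ℝ)) * I) := by
  unfold theta jacobiTheta₂
  refine tsum_congr fun n => ?_
  rw [jacobiTheta₂_term]
  have h1 : ((n * (n - 1) / 2).toNat : ℤ) = n * (n - 1) / 2 := Int.toNat_of_nonneg (div2_nonneg n)
  have h3 : (2 : ℤ) ∣ n * (n - 1) := by
    rcases Int.even_or_odd n with h | h
    · exact Dvd.dvd.mul_right h.two_dvd _
    · exact Dvd.dvd.mul_left (Int.even_sub_one.mpr (Int.not_even_iff_odd.mpr h)).two_dvd _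
  have h4 : (n * (n - 1) / 2) * 2 = n * (n - 1) := Int.ediv_mul_cancel h3
  have h2 : ((n * (n - 1) / 2).toNat : ℂ) = (n : ℂ) * ((n : ℂ) - 1) / 2 := by
    have h5 : (((n * (n - 1) / 2) : ℤ) : ℂ) * 2 = (n : ℂ) * ((n : ℂ) - 1) := by
      exact_mod_cast congrArg (fun m : ℤ => (m : ℂ)) h4
    have h6 : (((n * (n - 1) / 2).toNat : ℤ) : ℂ) = (((n * (n - 1) / 2) : ℤ) : ℂ) := by
      exact_mod_cast h1
    push_cast at h6
    rw [h6]
    linear_combination h5 / 2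
  have hexp : ((rexp u : ℝ) : ℂ) ^ (n * (n - 1) / 2).toNat * Q ^ n
      = cexp ((((n * (n - 1) / 2).toNat : ℂ)) * u + n * Complex.log Q) := by
    rw [Complex.exp_add, ofReal_exp, ← Complex.exp_nat_mul, Complex.exp_int_mul,
      Complex.exp_log hQ]
  rw [hexp]
  congr 1
  have hπ : (π : ℂ) ≠ 0 := by exact_mod_cast Real.pi_ne_zero
  have e1 : 2 * (π : ℂ) * I * n * ((Complex.log Q - u / 2) / (2 * π * I))
      = n * (Complex.log Q - u / 2) := by
    field_simp
  have e2 : (π : ℂ) * I * (n : ℂ) ^ 2 * (((-u / (2 * π) : ℝ) : ℂ) * I) = (n : ℂ) ^ 2 * u / 2 := by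
    rw [show (π : ℂ) * I * (n : ℂ) ^ 2 * (((-u / (2 * π) : ℝ) : ℂ) * I)
        = (π : ℂ) * (n : ℂ) ^ 2 * (((-u / (2 * π) : ℝ)) : ℂ) * (I * I) by ring, I_mul_I]
    push_cast
    field_simp
  have key : 2 * (π : ℂ) * I * n * ((Complex.log Q - u / 2) / (2 * π * I))
      + (π : ℂ) * I * (n : ℂ) ^ 2 * (((-u / (2 * π) : ℝ) : ℂ) * I)
      = n * Complex.log Q + ((n : ℂ) ^ 2 - n) * u / 2 := by
    rw [e1, e2]; ring
  rw [key, h2]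
  ring

lemma tau_im (u : ℝ) : ((((-u / (2 * π) : ℝ)) : ℂ) * I).im = -u / (2 * π) := by
  rw [Complex.mul_I_im, Complex.ofReal_re]

lemma hasDerivAt_theta (u : ℝ) (hu : u < 0) {Q : ℂ} (hQ : Q ∈ Complex.slitPlane) :
    HasDerivAt (theta (rexp u))
      (jacobiTheta₂' ((Complex.log Q - u / 2) / (2 * π * I)) (((-u / (2 * π) : ℝ)) * I)
        * (Q⁻¹ / (2 * π * I))) Q := by
  have hτ : 0 < ((((-u / (2 * π) : ℝ)) : ℂ) * I).im := by
    rw [tau_im]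
    exact div_pos (by linarith) (by positivity)
  have h1 := hasDerivAt_jacobiTheta₂_fst ((Complex.log Q - u / 2) / (2 * π * I)) hτ
  have h2 : HasDerivAt (fun Q' : ℂ => (Complex.log Q' - u / 2) / (2 * π * I))
      (Q⁻¹ / (2 * π * I)) Q :=
    ((Complex.hasDerivAt_log hQ).sub_const _).div_const _
  have h3 := h1.comp Q h2
  refine HasDerivAt.congr_of_eventuallyEq h3 ?_
  filter_upwards [compl_singleton_mem_nhds (slitPlane_ne_zero hQ)] with Q' hQ'
  exact theta_eq u hQ'

lemma ellq_eq_aux (u : ℝ) (hu : u < 0) {Q : ℂ} (hQ : Q ∈ Complex.slitPlane) :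
    ellq (rexp u) Q =
      -(jacobiTheta₂' ((Complex.log Q - u / 2) / (2 * π * I)) (((-u / (2 * π) : ℝ)) * I))
        / (2 * π * I) / jacobiTheta₂ ((Complex.log Q - u / 2) / (2 * π * I))
          (((-u / (2 * π) : ℝ)) * I) := by
  have hQ0 : Q ≠ 0 := slitPlane_ne_zero hQ
  have hπ : (π : ℂ) ≠ 0 := by exact_mod_cast Real.pi_ne_zero
  rw [ellq, (hasDerivAt_theta u hu hQ).deriv, theta_eq u hQ0]
  congr 1
  field_simp

lemma alg (A E τ θw θw' Z c : ℂ) (hA : A ≠ 0) (hE : E ≠ 0) (hτ : τ ≠ 0) (hθ : θw ≠ 0)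
    (hc : c ≠ 0) :
    -(1 / A * E / τ * (θw' - Z * θw)) / c / (1 / A * E * θw) = Z / (c * τ) - θw' / (c * τ * θw) := by
  rw [div_div, div_sub_div _ _ (mul_ne_zero hc hτ) (mul_ne_zero (mul_ne_zero hc hτ) hθ)]
  rw [div_eq_div_iff]
  · field_simp
    ring
  · exact mul_ne_zero hc (mul_ne_zero (mul_ne_zero (div_ne_zero one_ne_zero hA) hE) hθ)
  · exact mul_ne_zero (mul_ne_zero hc hτ) (mul_ne_zero (mul_ne_zero hc hτ) hθ)

set_option maxHeartbeats 1000000 in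
lemma ellq_eq (u : ℝ) (hu : u < 0) {Q : ℂ} (hQ : Q ∈ Complex.slitPlane)
    (hθ : jacobiTheta₂ (((Complex.log Q - u / 2) / (2 * π * I)) / (((-u / (2 * π) : ℝ)) * I))
      (-1 / ((((-u / (2 * π) : ℝ)) : ℂ) * I)) ≠ 0) :
    ellq (rexp u) Q = (Complex.log Q - u / 2) / u
      - jacobiTheta₂' (((Complex.log Q - u / 2) / (2 * π * I)) / (((-u / (2 * π) : ℝ)) * I))
          (-1 / ((((-u / (2 * π) : ℝ)) : ℂ) * I))
        / (u * jacobiTheta₂ (((Complex.log Q - u / 2) / (2 * π * I)) / (((-u / (2 * π) : ℝ)) * I))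
            (-1 / ((((-u / (2 * π) : ℝ)) : ℂ) * I))) := by
  have hπ : (π : ℂ) ≠ 0 := by exact_mod_cast Real.pi_ne_zero
  have hu0 : (u : ℂ) ≠ 0 := by exact_mod_cast hu.ne
  rw [ellq_eq_aux u hu hQ]
  set Z : ℂ := Complex.log Q - (u : ℂ) / 2 with hZdef
  set τ : ℂ := (((-u / (2 * π) : ℝ)) : ℂ) * I with hτdef
  set z : ℂ := Z / (2 * π * I) with hzdef
  have hτ0 : τ ≠ 0 := by
    rw [hτdef]
    apply mul_ne_zero _ I_ne_zero
    rw [Complex.ofReal_ne_zero]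
    have : (0:ℝ) < -u / (2 * π) := div_pos (by linarith) (by positivity)
    exact this.ne'
  have h2πτ : 2 * (π : ℂ) * I * τ = (u : ℂ) := by
    rw [hτdef]
    push_cast
    rw [show 2 * (π:ℂ) * I * (-↑u / (2 * ↑π) * I) = 2 * (π:ℂ) * (-↑u / (2 * ↑π)) * (I * I) by
      ring, I_mul_I]
    field_simp
  have hA : ((-I * τ) ^ ((1:ℂ) / 2)) ≠ 0 := by
    intro h
    rcases (cpow_eq_zero_iff _ _).mp h with ⟨h1, -⟩
    exact mul_ne_zero (neg_ne_zero.mpr I_ne_zero) hτ0 h1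
  have hE : cexp (-π * I * z ^ 2 / τ) ≠ 0 := Complex.exp_ne_zero _
  have hz2 : 2 * (π : ℂ) * I * z = Z := by
    rw [hzdef]
    field_simp
  rw [jacobiTheta₂_functional_equation z τ, jacobiTheta₂'_functional_equation z τ]
  rw [hz2, ← h2πτ]
  set θw := jacobiTheta₂ (z / τ) (-1 / τ) with hθw
  set θw' := jacobiTheta₂' (z / τ) (-1 / τ) with hθw'
  set A : ℂ := (-I * τ) ^ ((1:ℂ) / 2) with hAdef
  set E : ℂ := cexp (-π * I * z ^ 2 / τ) with hEdef
  clear_value θw θw' A E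
  clear_value Z τ z
  have hc : (2 * (π:ℂ) * I) ≠ 0 := mul_ne_zero (mul_ne_zero two_ne_zero hπ) I_ne_zero
  exact alg A E τ θw θw' Z _ hA hE hτ0 hθ hc

noncomputable def Bq (u A : ℝ) : ℝ :=
  ∑' n : ℤ, (|n| : ℝ) * rexp (-π * ((2 * π / (-u)) * (n : ℝ) ^ 2 - 2 * (A / (-u)) * (|n| : ℝ)))

lemma Bq_summable (u A : ℝ) (hu : u < 0) :
    Summable fun n : ℤ =>
      (|n| : ℝ) * rexp (-π * ((2 * π / (-u)) * (n : ℝ) ^ 2 - 2 * (A / (-u)) * (|n| : ℝ))) := by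
  have hnu : (0:ℝ) < -u := neg_pos.mpr hu
  have hT : 0 < 2 * π / (-u) := div_pos (by positivity) hnu
  simpa using summable_pow_mul_jacobiTheta₂_term_bound (A / (-u)) hT 1

lemma Bq_nonneg (u A : ℝ) : 0 ≤ Bq u A :=
  tsum_nonneg fun n => by positivity

lemma neg_one_div_tau (u : ℝ) (hu : u < 0) :
    -1 / ((((-u / (2 * π) : ℝ)) : ℂ) * I) = (((2 * π / (-u) : ℝ)) : ℂ) * I := by
  have hnu : (0:ℝ) < -u := neg_pos.mpr hu
  have hu0 : u ≠ 0 := hu.ne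
  have ha : ((-u / (2 * π) : ℝ) : ℂ) ≠ 0 := by
    rw [Complex.ofReal_ne_zero]
    have : (0:ℝ) < -u / (2 * π) := div_pos hnu (by positivity)
    exact this.ne'
  rw [div_eq_iff (mul_ne_zero ha I_ne_zero)]
  rw [show (((2 * π / (-u) : ℝ)) : ℂ) * I * ((((-u / (2 * π) : ℝ)) : ℂ) * I)
      = (((2 * π / (-u) : ℝ)) : ℂ) * (((-u / (2 * π) : ℝ)) : ℂ) * (I * I) by ring, I_mul_I]
  have hπ : (π : ℝ) ≠ 0 := Real.pi_ne_zero
  have hr : (2 * π / (-u)) * (-u / (2 * π)) = 1 := by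
    rw [div_mul_div_comm, div_eq_one_iff_eq (by positivity)]
    ring
  rw [← Complex.ofReal_mul, hr]
  norm_num

lemma theta_bound (u A : ℝ) (hu : u < 0) (hA0 : 0 ≤ A) {Q : ℂ}
    (harg : |Complex.arg Q| ≤ A) :
    ‖jacobiTheta₂ (((Complex.log Q - u / 2) / (2 * π * I)) / (((-u / (2 * π) : ℝ)) * I))
        (-1 / ((((-u / (2 * π) : ℝ)) : ℂ) * I)) - 1‖ ≤ Bq u A ∧
    ‖jacobiTheta₂' (((Complex.log Q - u / 2) / (2 * π * I)) / (((-u / (2 * π) : ℝ)) * I))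
        (-1 / ((((-u / (2 * π) : ℝ)) : ℂ) * I))‖ ≤ 2 * π * Bq u A := by
  have hnu : (0:ℝ) < -u := neg_pos.mpr hu
  have hπ : (π : ℂ) ≠ 0 := by exact_mod_cast Real.pi_ne_zero
  have hu0 : (u : ℂ) ≠ 0 := by exact_mod_cast hu.ne
  rw [neg_one_div_tau u hu]
  set w : ℂ := ((Complex.log Q - u / 2) / (2 * π * I)) / (((-u / (2 * π) : ℝ)) * I) with hwdef
  set S : ℝ := A / (-u) with hSdef
  set T : ℝ := 2 * π / (-u) with hTdef
  have hT : 0 < T := div_pos (by positivity) hnu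
  have h2πτ : 2 * (π : ℂ) * I * ((((-u / (2 * π) : ℝ)) : ℂ) * I) = (u : ℂ) := by
    push_cast
    rw [show 2 * (π:ℂ) * I * (-↑u / (2 * ↑π) * I) = 2 * (π:ℂ) * (-↑u / (2 * ↑π)) * (I * I) by
      ring, I_mul_I]
    field_simp
  have hw : w = (Complex.log Q - u / 2) / u := by
    rw [hwdef, div_div, h2πτ]
  have him_w : |w.im| ≤ S := by
    have him : ((Complex.log Q - (u:ℂ) / 2) / (u : ℂ)).im = (Complex.log Q).im / u := by
      rw [Complex.div_ofReal_im]
      congr 1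
      simp
    rw [hw, him, Complex.log_im, abs_div, abs_of_neg hu, hSdef]
    gcongr
  have him_τ : T ≤ (((T : ℝ) : ℂ) * I).im := by
    rw [Complex.mul_I_im, Complex.ofReal_re]
  have hτpos : 0 < (((T : ℝ) : ℂ) * I).im := lt_of_lt_of_le hT him_τ
  have hBsum := Bq_summable u A hu
  constructor
  · have hg : HasSum (fun n => jacobiTheta₂_term n w (((T : ℝ) : ℂ) * I) -
        (if n = 0 then (1:ℂ) else 0)) (jacobiTheta₂ w (((T : ℝ) : ℂ) * I) - 1) :=
      (hasSum_jacobiTheta₂_term w hτpos).sub (hasSum_ite_eq 0 1)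
    have hb : ∀ n : ℤ, ‖jacobiTheta₂_term n w (((T : ℝ) : ℂ) * I) -
        (if n = 0 then (1:ℂ) else 0)‖
        ≤ (|n| : ℝ) * rexp (-π * (T * (n : ℝ) ^ 2 - 2 * S * (|n| : ℝ))) := by
      intro n
      rcases eq_or_ne n 0 with rfl | hn
      · simp [jacobiTheta₂_term]
      · rw [if_neg hn, sub_zero]
        have h1 := norm_jacobiTheta₂_term_le hT him_w him_τ n
        rw [Int.cast_abs] at h1
        refine h1.trans ?_
        have h2 : (1:ℝ) ≤ |(n : ℝ)| := by
          rw [← Int.cast_abs]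
          exact_mod_cast Int.one_le_abs hn
        exact le_mul_of_one_le_left (Real.exp_pos _).le h2
    have hsg : Summable (fun n : ℤ => ‖jacobiTheta₂_term n w (((T : ℝ) : ℂ) * I) -
        (if n = 0 then (1:ℂ) else 0)‖) :=
      Summable.of_nonneg_of_le (fun n => norm_nonneg _) hb hBsum
    calc ‖jacobiTheta₂ w (((T : ℝ) : ℂ) * I) - 1‖ = ‖∑' n : ℤ, (jacobiTheta₂_term n w
          (((T : ℝ) : ℂ) * I) - (if n = 0 then (1:ℂ) else 0))‖ := by rw [hg.tsum_eq]
      _ ≤ ∑' n : ℤ, ‖jacobiTheta₂_term n w (((T : ℝ) : ℂ) * I) -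
          (if n = 0 then (1:ℂ) else 0)‖ := norm_tsum_le_tsum_norm hsg
      _ ≤ Bq u A := Summable.tsum_le_tsum hb hsg hBsum
  · have hb : ∀ n : ℤ, ‖jacobiTheta₂'_term n w (((T : ℝ) : ℂ) * I)‖
        ≤ 2 * π * ((|n| : ℝ) * rexp (-π * (T * (n : ℝ) ^ 2 - 2 * S * (|n| : ℝ)))) := by
      intro n
      have h1 := norm_jacobiTheta₂'_term_le hT him_w him_τ n
      rw [Int.cast_abs] at h1
      calc ‖jacobiTheta₂'_term n w (((T : ℝ) : ℂ) * I)‖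
          ≤ 2 * π * (|n| : ℝ) * rexp (-π * (T * (n : ℝ) ^ 2 - 2 * S * (|n| : ℝ))) := h1
        _ = 2 * π * ((|n| : ℝ) * rexp (-π * (T * (n : ℝ) ^ 2 - 2 * S * (|n| : ℝ)))) := by ring
    have hsg : Summable (fun n : ℤ => ‖jacobiTheta₂'_term n w (((T : ℝ) : ℂ) * I)‖) :=
      Summable.of_nonneg_of_le (fun n => norm_nonneg _) hb (hBsum.mul_left (2 * π))
    calc ‖jacobiTheta₂' w (((T : ℝ) : ℂ) * I)‖
        = ‖∑' n : ℤ, jacobiTheta₂'_term n w (((T : ℝ) : ℂ) * I)‖ := rfl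
      _ ≤ ∑' n : ℤ, ‖jacobiTheta₂'_term n w (((T : ℝ) : ℂ) * I)‖ := norm_tsum_le_tsum_norm hsg
      _ ≤ ∑' n : ℤ, 2 * π * ((|n| : ℝ) * rexp (-π * (T * (n : ℝ) ^ 2 - 2 * S * (|n| : ℝ)))) :=
          Summable.tsum_le_tsum hb hsg (hBsum.mul_left (2 * π))
      _ = 2 * π * Bq u A := by rw [tsum_mul_left]; rfl

lemma cq_nonneg (A : ℝ) (hA0 : 0 ≤ A) (hAπ : A < π) (n : ℤ) :
    0 ≤ π * (2 * π * (n:ℝ) ^ 2 - 2 * A * |(n:ℝ)|) := by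
  apply mul_nonneg Real.pi_pos.le
  rcases eq_or_ne n 0 with rfl | hn
  · norm_num
  · have h1 : (1:ℝ) ≤ |(n:ℝ)| := by
      rw [← Int.cast_abs]; exact_mod_cast Int.one_le_abs hn
    have h2 : (n:ℝ)^2 = |(n:ℝ)|^2 := (_root_.sq_abs _).symm
    have h3 : 2 * A * |(n:ℝ)| ≤ 2 * π * (n:ℝ)^2 := by
      have c1 : 2 * A * |(n:ℝ)| ≤ 2 * π * |(n:ℝ)| := by nlinarith
      have habs : |(n:ℝ)| * 1 ≤ |(n:ℝ)| * |(n:ℝ)| := mul_le_mul_of_nonneg_left h1 (abs_nonneg _)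
      have c2 : 2 * π * |(n:ℝ)| ≤ 2 * π * |(n:ℝ)|^2 := by nlinarith [Real.pi_pos, habs]
      rw [h2]; linarith
    linarith

lemma exp_arg_eq (u A : ℝ) (hu : u < 0) (n : ℤ) :
    -π * ((2 * π / (-u)) * (n : ℝ) ^ 2 - 2 * (A / (-u)) * (|n| : ℝ))
      = -(π * (2 * π * (n:ℝ) ^ 2 - 2 * A * |(n:ℝ)|)) / (-u) := by
  have hnu : (0:ℝ) < -u := neg_pos.mpr hu
  have hu0 : u ≠ 0 := hu.ne
  rw [eq_div_iff hnu.ne']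
  field_simp
  ring

lemma Bq_tendsto (A : ℝ) (hA0 : 0 ≤ A) (hAπ : A < π) :
    Tendsto (fun u => Bq u A) (nhdsWithin (0:ℝ) (Set.Iio 0)) (nhds 0) := by
  have key := tendsto_tsum_of_dominated_convergence
    (f := fun (u : ℝ) (n : ℤ) =>
      (|n| : ℝ) * rexp (-π * ((2 * π / (-u)) * (n : ℝ) ^ 2 - 2 * (A / (-u)) * (|n| : ℝ))))
    (g := fun _ : ℤ => (0:ℝ))
    (𝓕 := nhdsWithin (0:ℝ) (Set.Iio 0))
    (bound := fun n : ℤ =>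
      (|n| : ℝ) * rexp (-π * ((2 * π / (-(-1:ℝ))) * (n : ℝ) ^ 2
        - 2 * (A / (-(-1:ℝ))) * (|n| : ℝ))))
    (Bq_summable (-1) A (by norm_num)) ?_ ?_
  · simpa [Bq] using key
  · intro n
    rcases eq_or_ne n 0 with rfl | hn
    · simpa using tendsto_const_nhds
    · have hc : 0 < π * (2 * π * (n:ℝ) ^ 2 - 2 * A * |(n:ℝ)|) := by
        have h1 : (1:ℝ) ≤ |(n:ℝ)| := by
          rw [← Int.cast_abs]; exact_mod_cast Int.one_le_abs hn
        have h2 : (n:ℝ)^2 = |(n:ℝ)|^2 := (_root_.sq_abs _).symm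
        have hπ := Real.pi_pos
        have c1 : 2 * A * |(n:ℝ)| < 2 * π * |(n:ℝ)| := by nlinarith
        have habs : |(n:ℝ)| * 1 ≤ |(n:ℝ)| * |(n:ℝ)| := mul_le_mul_of_nonneg_left h1 (abs_nonneg _)
        have c2 : 2 * π * |(n:ℝ)| ≤ 2 * π * |(n:ℝ)|^2 := by nlinarith [habs]
        have : 2 * A * |(n:ℝ)| < 2 * π * (n:ℝ)^2 := by rw [h2]; linarith
        nlinarith
      have h1 : Tendsto (fun u : ℝ => -u) (nhdsWithin (0:ℝ) (Set.Iio 0))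
          (nhdsWithin (0:ℝ) (Set.Ioi 0)) := by
        apply tendsto_nhdsWithin_of_tendsto_nhds_of_eventually_within
        · simpa using (continuous_neg.tendsto (0:ℝ)).mono_left nhdsWithin_le_nhds
        · filter_upwards [self_mem_nhdsWithin] with u hu
          simpa using hu
      have h3 : Tendsto (fun x : ℝ => (π * (2 * π * (n:ℝ) ^ 2 - 2 * A * |(n:ℝ)|)) * x⁻¹)
          (nhdsWithin (0:ℝ) (Set.Ioi 0)) atTop :=
        tendsto_inv_nhdsGT_zero.const_mul_atTop hc
      have h2 : Tendsto (fun u : ℝ => -(π * (2 * π * (n:ℝ) ^ 2 - 2 * A * |(n:ℝ)|)) / (-u))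
          (nhdsWithin (0:ℝ) (Set.Iio 0)) atBot := by
        refine (tendsto_neg_atTop_atBot.comp (h3.comp h1)).congr fun u => ?_
        simp only [Function.comp_apply]
        rw [← div_eq_mul_inv, neg_div]
      have h4 : Tendsto (fun u : ℝ =>
          (|n| : ℝ) * rexp (-(π * (2 * π * (n:ℝ) ^ 2 - 2 * A * |(n:ℝ)|)) / (-u)))
          (nhdsWithin (0:ℝ) (Set.Iio 0)) (nhds 0) := by
        have := (Real.tendsto_exp_atBot.comp h2).const_mul (|n| : ℝ)
        simpa using this
      refine h4.congr' ?_
      filter_upwards [self_mem_nhdsWithin] with u hu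
      rw [exp_arg_eq u A hu n]
  · filter_upwards [self_mem_nhdsWithin,
      (eventually_gt_nhds (by norm_num : (-1:ℝ) < 0)).filter_mono nhdsWithin_le_nhds]
      with u hu hu1 n
    have hu' : u < 0 := hu
    have hnu : (0:ℝ) < -u := neg_pos.mpr hu'
    rw [Real.norm_eq_abs, abs_mul, _root_.abs_abs, _root_.abs_of_nonneg (Real.exp_pos _).le]
    rw [exp_arg_eq u A hu' n, exp_arg_eq (-1) A (by norm_num) n]
    apply mul_le_mul_of_nonneg_left _ (abs_nonneg _)
    apply Real.exp_le_exp.mpr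
    rw [neg_div, neg_div, neg_le_neg_iff]
    have hc := cq_nonneg A hA0 hAπ n
    rw [show (-(-1:ℝ)) = 1 by norm_num, div_one, le_div_iff₀ hnu]
    nlinarith

/-- With `q(t) = q₀^t`, the functions `(q(t) - 1)·ℓ_{q(t)}` converge, as `t → 0⁺`, to the
principal branch of the logarithm, uniformly on every compact subset of `ℂ ∖ ℝ_{≤0}`
(the slit plane). -/
theorem stmt4 (q₀ : ℝ) (hq0 : 0 < q₀) (hq1 : q₀ < 1) :
    ∀ K : Set ℂ, IsCompact K → K ⊆ Complex.slitPlane →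
      TendstoUniformlyOn
        (fun (t : ℝ) (Q : ℂ) => (((q₀ ^ t : ℝ) : ℂ) - 1) * ellq ((q₀ ^ t : ℝ) : ℂ) Q)
        (fun Q => Complex.log Q)
        (nhdsWithin (0 : ℝ) (Set.Ioi 0)) K := by
  intro K hK hKsub
  rcases K.eq_empty_or_nonempty with rfl | hne
  · exact tendstoUniformlyOn_empty
  have hlog : Real.log q₀ < 0 := Real.log_neg hq0 hq1
  -- maximum of |arg| on K
  have hargcont : ContinuousOn (fun Q : ℂ => |Complex.arg Q|) K := fun Q hQ =>
    ((continuousAt_arg (hKsub hQ)).abs).continuousWithinAt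
  obtain ⟨Q₀, hQ₀K, hQ₀max⟩ := hK.exists_isMaxOn hne hargcont
  set A := |Complex.arg Q₀| with hAdef
  have hA0 : 0 ≤ A := abs_nonneg _
  have hAπ : A < π := by
    rw [hAdef, abs_lt]
    exact ⟨Complex.neg_pi_lt_arg _,
      lt_of_le_of_ne (Complex.arg_le_pi _) (Complex.slitPlane_arg_ne_pi (hKsub hQ₀K))⟩
  -- bound for log on K
  have hlogcont : ContinuousOn Complex.log K := fun Q hQ =>
    ((Complex.differentiableAt_log (hKsub hQ)).continuousAt).continuousWithinAt
  obtain ⟨M0, hM0⟩ := hK.exists_bound_of_continuousOn hlogcont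
  set M := max M0 0 with hMdef
  have hM : ∀ Q ∈ K, ‖Complex.log Q‖ ≤ M := fun Q hQ => (hM0 Q hQ).trans (le_max_left _ _)
  have hMnn : 0 ≤ M := le_max_right _ _
  -- limits
  have hu_tend0 : Tendsto (fun t : ℝ => t * Real.log q₀) (nhdsWithin 0 (Set.Ioi 0)) (nhds 0) := by
    have hc : Continuous (fun t : ℝ => t * Real.log q₀) := continuous_id.mul continuous_const
    have h := hc.tendsto (0:ℝ)
    simpa using h.mono_left nhdsWithin_le_nhds
  have hu_tendIio : Tendsto (fun t : ℝ => t * Real.log q₀) (nhdsWithin 0 (Set.Ioi 0))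
      (nhdsWithin 0 (Set.Iio 0)) := by
    apply tendsto_nhdsWithin_of_tendsto_nhds_of_eventually_within _ hu_tend0
    filter_upwards [self_mem_nhdsWithin] with t ht
    exact mul_neg_of_pos_of_neg ht hlog
  have hB_tend : Tendsto (fun t : ℝ => Bq (t * Real.log q₀) A) (nhdsWithin 0 (Set.Ioi 0))
      (nhds 0) := (Bq_tendsto A hA0 hAπ).comp hu_tendIio
  have habs_tend : Tendsto (fun t : ℝ => |t * Real.log q₀|) (nhdsWithin 0 (Set.Ioi 0))
      (nhds 0) := by
    simpa using hu_tend0.abs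
  have hE_tend : Tendsto (fun t : ℝ => |t * Real.log q₀| * M + |t * Real.log q₀| / 2
      + 4 * π * Bq (t * Real.log q₀) A) (nhdsWithin 0 (Set.Ioi 0)) (nhds 0) := by
    have := ((habs_tend.mul_const M).add (habs_tend.div_const 2)).add (hB_tend.const_mul (4*π))
    simpa using this
  rw [Metric.tendstoUniformlyOn_iff]
  intro ε hε
  filter_upwards [eventually_mem_nhdsWithin, habs_tend.eventually_lt_const one_pos,
    hB_tend.eventually_lt_const (by norm_num : (0:ℝ) < 1/2), hE_tend.eventually_lt_const hε]
    with t ht h1t h2t h3t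
  intro Q hQm
  set u := t * Real.log q₀ with hudef
  have hu : u < 0 := mul_neg_of_pos_of_neg ht hlog
  have hu0 : u ≠ 0 := hu.ne
  have huC : (u : ℂ) ≠ 0 := by exact_mod_cast hu0
  have hQs : Q ∈ Complex.slitPlane := hKsub hQm
  have hq_eq : ((q₀ ^ t : ℝ) : ℂ) = ((rexp u : ℝ) : ℂ) := by
    rw [Real.rpow_def_of_pos hq0, mul_comm]
  have harg : |Complex.arg Q| ≤ A := hQ₀max hQm
  obtain ⟨hb1, hb2⟩ := theta_bound u A hu hA0 harg
  set Tw := jacobiTheta₂ (((Complex.log Q - u / 2) / (2 * π * I)) / (((-u / (2 * π) : ℝ)) * I))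
      (-1 / ((((-u / (2 * π) : ℝ)) : ℂ) * I)) with hTwdef
  set Tw' := jacobiTheta₂' (((Complex.log Q - u / 2) / (2 * π * I)) / (((-u / (2 * π) : ℝ)) * I))
      (-1 / ((((-u / (2 * π) : ℝ)) : ℂ) * I)) with hTw'def
  have hTlow : (1:ℝ)/2 ≤ ‖Tw‖ := by
    have h5 : ‖(1:ℂ)‖ - ‖Tw‖ ≤ ‖(1:ℂ) - Tw‖ := norm_sub_norm_le _ _
    rw [norm_one, norm_sub_rev] at h5
    have := hb1
    linarith [h2t]
  have hTne : Tw ≠ 0 := by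
    intro h
    rw [h, norm_zero] at hTlow
    linarith
  have hell := ellq_eq u hu hQs hTne
  rw [dist_eq_norm, hq_eq, hell, ← hTwdef, ← hTw'def]
  -- algebraic identity
  clear_value Tw Tw'
  have hiden : Complex.log Q - (((rexp u : ℝ) : ℂ) - 1) *
        ((Complex.log Q - (u:ℂ) / 2) / (u:ℂ) - Tw' / ((u:ℂ) * Tw))
      = -((((rexp u - 1)/u - 1 : ℝ) : ℂ) * Complex.log Q) + (((rexp u - 1)/2 : ℝ) : ℂ)
        + (((rexp u - 1)/u : ℝ) : ℂ) * (Tw' / Tw) := by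
    push_cast
    field_simp
    ring
  rw [hiden]
  -- norms
  have habs1 : |(rexp u - 1)/u - 1| ≤ |u| := by
    have h6 := Real.abs_exp_sub_one_sub_id_le h1t.le
    have h7 : (rexp u - 1)/u - 1 = (rexp u - 1 - u)/u := by field_simp
    rw [h7, abs_div]
    rw [div_le_iff₀ (abs_pos.mpr hu0)]
    calc |rexp u - 1 - u| ≤ u ^ 2 := h6
      _ = |u| * |u| := by rw [← abs_mul, _root_.abs_of_nonneg (mul_self_nonneg u), sq]
  have habs2 : |rexp u - 1| ≤ |u| := by
    have h8 := Real.add_one_le_exp u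
    have h9 : rexp u ≤ 1 := by
      rw [← Real.exp_zero]
      exact Real.exp_le_exp.mpr hu.le
    rw [abs_of_nonpos (by linarith), abs_of_neg hu]
    linarith
  have habs3 : |(rexp u - 1)/u| ≤ 1 := by
    rw [abs_div, div_le_one (abs_pos.mpr hu0)]
    exact habs2
  have hTdiv : ‖Tw' / Tw‖ ≤ 4 * π * Bq u A := by
    rw [norm_div, div_le_iff₀ (lt_of_lt_of_le one_half_pos hTlow)]
    calc ‖Tw'‖ ≤ 2 * π * Bq u A := hb2
      _ = 4 * π * Bq u A * (1/2) := by ring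
      _ ≤ 4 * π * Bq u A * ‖Tw‖ := by
          apply mul_le_mul_of_nonneg_left hTlow
          exact mul_nonneg (by positivity) (Bq_nonneg u A)
  calc ‖-((((rexp u - 1)/u - 1 : ℝ) : ℂ) * Complex.log Q) + (((rexp u - 1)/2 : ℝ) : ℂ)
        + (((rexp u - 1)/u : ℝ) : ℂ) * (Tw' / Tw)‖
      ≤ ‖-((((rexp u - 1)/u - 1 : ℝ) : ℂ) * Complex.log Q)‖ + ‖(((rexp u - 1)/2 : ℝ) : ℂ)‖
        + ‖(((rexp u - 1)/u : ℝ) : ℂ) * (Tw' / Tw)‖ := norm_add₃_le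
    _ ≤ |u| * M + |u| / 2 + 1 * (4 * π * Bq u A) := by
        gcongr ?_ + ?_ + ?_
        · rw [norm_neg, norm_mul, Complex.norm_real, Real.norm_eq_abs]
          exact mul_le_mul habs1 (hM Q hQm) (norm_nonneg _) (abs_nonneg _)
        · rw [Complex.norm_real, Real.norm_eq_abs, abs_div, _root_.abs_two]
          gcongr
        · rw [norm_mul, Complex.norm_real, Real.norm_eq_abs]
          exact mul_le_mul habs3 hTdiv (norm_nonneg _) zero_le_one
    _ = |u| * M + |u| / 2 + 4 * π * Bq u A := by ring
    _ < ε := h3t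
end

section
/- Let N ∈ ℕ, let q ∈ ℂ∖{0}, and let a_0, …, a_N ∈ ℂ be such that a_i = 1 for some index i ∈ {0,…,N} and q^r·a_j ≠ 1 for every j ∈ {0,…,N} and every integer r ≥ 1. Define the formal power series g ∈ ℂ[[Q]] whose d-th coefficient is (∏_{j=0}^N ∏_{r=1}^d (1 − q^r a_j))^{−1}. Then g satisfies the q-difference equation (1 − a_0·σ_q)∘(1 − a_1·σ_q)∘⋯∘(1 − a_N·σ_q)(g) = Q·g, where the operators are composed as ℂ-linear endomorphisms of ℂ[[Q]]. (Taking a_j = Λ_jΛ_i^{−1}, this is the q-difference equation (1 − Λ_0 σ_q)⋯(1 − Λ_N σ_q)F = QF satisfied by the specialization at P = Λ_i of Givental's small equivariant K-theoretical J-function of ℙ^N, after removing the q-character prefactor Λ_i^{−ℓ_q(Q)}.) -/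
open Complex Filter PowerSeries

private lemma aux_fold (q : ℂ) (L : List ℂ) (f : PowerSeries ℂ) :
    (L.map (fun b => (fun f : PowerSeries ℂ =>
        f - PowerSeries.C b * PowerSeries.mk fun d => q ^ d * PowerSeries.coeff d f))).foldr
        (· ∘ ·) id f
      = PowerSeries.mk fun d => (L.map fun b => 1 - q ^ d * b).prod * PowerSeries.coeff d f := by
  induction L with
  | nil => simp; ext d; simp
  | cons b L ih =>
      simp only [List.map_cons, List.foldr_cons, Function.comp_apply, ih]
      ext d
      simp [PowerSeries.coeff_mk, List.prod_cons]
      ring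

/-- The q-difference equation `(1 - a₀σ_q)⋯(1 - a_Nσ_q) g = Q·g` for the formal power series
`g = Σ_d Q^d / ∏_{j=0}^N ∏_{r=1}^d (1 - q^r a_j)`, where `σ_q` is the substitution
`Q ↦ qQ` on `ℂ[[Q]]`.  (This is the q-difference equation satisfied by the specialization
at `P = Λ_i` of Givental's small equivariant K-theoretical J-function of `ℙ^N`, with
`a_j = Λ_jΛ_i⁻¹`, after removing the q-character prefactor.) -/
theorem stmt6 (N : ℕ) (q : ℂ) (hq : q ≠ 0) (a : Fin (N + 1) → ℂ)
    (hone : ∃ i, a i = 1)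
    (hres : ∀ j, ∀ r : ℕ, 1 ≤ r → q ^ r * a j ≠ 1) :
    (List.ofFn (fun j : Fin (N + 1) => (fun f : PowerSeries ℂ =>
          f - PowerSeries.C (a j) *
            PowerSeries.mk fun d => q ^ d * PowerSeries.coeff d f))).foldr (· ∘ ·) id
        (PowerSeries.mk fun d =>
          (∏ j : Fin (N + 1), ∏ r ∈ Finset.Icc 1 d, (1 - q ^ r * a j))⁻¹) =
      PowerSeries.X *
        PowerSeries.mk fun d =>
          (∏ j : Fin (N + 1), ∏ r ∈ Finset.Icc 1 d, (1 - q ^ r * a j))⁻¹ := by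
  have hofn : (List.ofFn (fun j : Fin (N + 1) => (fun f : PowerSeries ℂ =>
          f - PowerSeries.C (a j) *
            PowerSeries.mk fun d => q ^ d * PowerSeries.coeff d f)))
      = (List.ofFn a).map (fun b => (fun f : PowerSeries ℂ =>
          f - PowerSeries.C b * PowerSeries.mk fun d => q ^ d * PowerSeries.coeff d f)) := by
    rw [List.map_ofFn]; rfl
  rw [hofn, aux_fold]
  have hprod : ∀ d : ℕ, ((List.ofFn a).map fun b => 1 - q ^ d * b).prod
      = ∏ j : Fin (N + 1), (1 - q ^ d * a j) := by
    intro d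
    rw [List.map_ofFn, List.prod_ofFn]
    rfl
  ext d
  rw [PowerSeries.coeff_mk, hprod]
  cases d with
  | zero =>
      obtain ⟨i, hi⟩ := hone
      rw [PowerSeries.coeff_zero_eq_constantCoeff]
      simp only [map_mul]
      rw [Finset.prod_eq_zero (Finset.mem_univ i) (by simp [hi])]
      simp
  | succ d =>
      rw [PowerSeries.coeff_succ_X_mul, PowerSeries.coeff_mk]
      have hIcc : Finset.Icc 1 (d + 1) = insert (d + 1) (Finset.Icc 1 d) := by
        ext x; simp [Finset.mem_Icc]; omega
      have hsplit : (∏ j : Fin (N + 1), ∏ r ∈ Finset.Icc 1 (d + 1), (1 - q ^ r * a j))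
          = (∏ j : Fin (N + 1), (1 - q ^ (d + 1) * a j)) *
            ∏ j : Fin (N + 1), ∏ r ∈ Finset.Icc 1 d, (1 - q ^ r * a j) := by
        rw [← Finset.prod_mul_distrib]
        refine Finset.prod_congr rfl fun j _ => ?_
        rw [hIcc, Finset.prod_insert (by simp)]
      rw [hsplit, mul_inv]
      have hne : (∏ j : Fin (N + 1), (1 - q ^ (d + 1) * a j)) ≠ 0 := by
        refine Finset.prod_ne_zero_iff.mpr fun j _ => ?_
        have := hres j (d + 1) (by omega)
        intro h
        apply this
        linear_combination -h
      rw [← mul_assoc, mul_inv_cancel₀ hne, one_mul, PowerSeries.coeff_mk]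
end

section
/- Let N ∈ ℕ, let z ∈ ℂ∖{0}, let λ_0, …, λ_N ∈ ℂ, and fix i ∈ {0,…,N}. Assume the non-resonance condition λ_i − λ_j + rz ≠ 0 for every j ∈ {0,…,N} and every integer r ≥ 1. Define the formal power series h ∈ ℂ[[Q]] whose d-th coefficient is ∏_{r=1}^d ∏_{j=0}^N (λ_i − λ_j + rz)^{−1}. Then h satisfies the differential equation ((λ_i − λ_0) + z·D)∘((λ_i − λ_1) + z·D)∘⋯∘((λ_i − λ_N) + z·D)(h) = Q·h, where the operators are composed as ℂ-linear endomorphisms of ℂ[[Q]]. (This is the differential equation (−λ_0 + zQ∂_Q)⋯(−λ_N + zQ∂_Q)J = QJ satisfied by the specialization at H = λ_i of Givental's small equivariant cohomological J-function of ℙ^N, after removing the prefactor Q^{λ_i/z}.) -/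
open Complex Filter PowerSeries

private lemma stmt7_aux (z : ℂ) (L : List ℂ) (g : PowerSeries ℂ) (d : ℕ) :
    PowerSeries.coeff d
      ((L.map (fun c => (fun f : PowerSeries ℂ =>
          PowerSeries.C c * f +
            PowerSeries.C z *
              PowerSeries.mk fun n => (n : ℂ) * PowerSeries.coeff n f))).foldr (· ∘ ·) id g)
    = (L.map (fun c => c + d * z)).prod * PowerSeries.coeff d g := by
  induction L with
  | nil => simp
  | cons c L ih =>
    simp only [List.map_cons, List.foldr_cons, Function.comp_apply, List.prod_cons,
      map_add, PowerSeries.coeff_C_mul, PowerSeries.coeff_mk, ih]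
    ring

/-- The differential equation `((λ_i-λ_0) + zD)⋯((λ_i-λ_N) + zD) h = Q·h` for the formal
power series `h = Σ_d Q^d ∏_{r=1}^d ∏_{j=0}^N (λ_i - λ_j + rz)⁻¹`, where `D = Q·d/dQ`
on `ℂ[[Q]]`.  (This is the differential equation satisfied by the specialization at
`H = λ_i` of Givental's small equivariant cohomological J-function of `ℙ^N`, after
removing the prefactor `Q^{λ_i/z}`.) -/
theorem stmt7 (N : ℕ) (z : ℂ) (hz : z ≠ 0) (lam : Fin (N + 1) → ℂ) (i : Fin (N + 1))
    (hres : ∀ j, ∀ r : ℕ, 1 ≤ r → lam i - lam j + r * z ≠ 0) :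
    (List.ofFn (fun j : Fin (N + 1) => (fun f : PowerSeries ℂ =>
          PowerSeries.C (lam i - lam j) * f +
            PowerSeries.C z *
              PowerSeries.mk fun d => (d : ℂ) * PowerSeries.coeff d f))).foldr (· ∘ ·) id
        (PowerSeries.mk fun d =>
          ∏ r ∈ Finset.Icc 1 d, ∏ j : Fin (N + 1), (lam i - lam j + r * z)⁻¹) =
      PowerSeries.X *
        PowerSeries.mk fun d =>
          ∏ r ∈ Finset.Icc 1 d, ∏ j : Fin (N + 1), (lam i - lam j + r * z)⁻¹ := by
  have hofn : (List.ofFn (fun j : Fin (N + 1) => (fun f : PowerSeries ℂ =>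
          PowerSeries.C (lam i - lam j) * f +
            PowerSeries.C z *
              PowerSeries.mk fun d => (d : ℂ) * PowerSeries.coeff d f)))
      = (List.ofFn (fun j : Fin (N + 1) => lam i - lam j)).map
          (fun c => (fun f : PowerSeries ℂ =>
            PowerSeries.C c * f +
              PowerSeries.C z *
                PowerSeries.mk fun n => (n : ℂ) * PowerSeries.coeff n f)) := by
    rw [List.map_ofFn]
    rfl
  ext d
  rw [hofn, stmt7_aux]
  have hprod : ∀ d : ℕ, ((List.ofFn (fun j : Fin (N + 1) => lam i - lam j)).map
      (fun c => c + (d : ℂ) * z)).prod = ∏ j : Fin (N + 1), (lam i - lam j + d * z) := by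
    intro d
    rw [List.map_ofFn, List.prod_ofFn]
    rfl
  rw [hprod]
  cases d with
  | zero =>
    simp only [PowerSeries.coeff_zero_X_mul]
    rw [mul_comm]
    rw [Finset.prod_eq_zero (Finset.mem_univ i) (by simp)]
    simp
  | succ n =>
    rw [PowerSeries.coeff_succ_X_mul]
    simp only [PowerSeries.coeff_mk]
    rw [show Finset.Icc 1 (n + 1) = insert (n + 1) (Finset.Icc 1 n) by
      ext x; simp only [Finset.mem_Icc, Finset.mem_insert]; omega]
    rw [Finset.prod_insert (by simp)]
    rw [mul_left_comm, ← mul_assoc, ← Finset.prod_mul_distrib]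
    have : ∀ j : Fin (N + 1),
        (lam i - lam j + ((n : ℂ) + 1) * z)⁻¹ * (lam i - lam j + ((n : ℂ) + 1) * z) = 1 := by
      intro j
      exact inv_mul_cancel₀ (by have := hres j (n + 1) (by omega); push_cast at this ⊢; exact this)
    simp [this]
end

section
/- Let N ∈ ℕ and let q ∈ ℂ with 0 < |q| < 1. Work in the ring R = ℂ[x]/(x^{N+1}) and in formal power series R[[Q]]. For each r ≥ 1, the element 1 − q^r(1 − x̄) of R is invertible (its scalar part 1 − q^r is nonzero). Define g ∈ R[[Q]] whose d-th coefficient is ∏_{r=1}^d (1 − q^r(1 − x̄))^{−(N+1)}. Then g satisfies (Id − (1 − x̄)·σ_q)^{N+1}(g) = Q·g, where the operator is the (N+1)-st iterate of the R-linear endomorphism f ↦ f − (1 − x̄)·σ_q(f) of R[[Q]]. (This is the q-difference equation (1 − σ_q)^{N+1}J = QJ satisfied by Givental's small (non-equivariant) K-theoretical J-function of ℙ^N, rewritten in the K-theory ring K(ℙ^N)⊗ℂ ≅ ℂ[x]/(x^{N+1}) with P^{−1} = 1 − x̄, after removing the q-character prefactor P^{−ℓ_q(Q)}.) -/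
open Complex PowerSeries

/-- The ring `R = ℂ[x]/(x^{N+1})`, a model for `K(ℙ^N) ⊗ ℂ` (and for `H^*(ℙ^N;ℂ)`). -/
abbrev KRing (N : ℕ) : Type := AdjoinRoot ((Polynomial.X : Polynomial ℂ) ^ (N + 1))

/-- The class `x̄` of `x` in `ℂ[x]/(x^{N+1})`. -/
noncomputable def xbar (N : ℕ) : KRing N := AdjoinRoot.root _

lemma xbar_pow (N : ℕ) : (xbar N) ^ (N + 1) = 0 := by
  have h : xbar N = AdjoinRoot.mk _ (Polynomial.X : Polynomial ℂ) := rfl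
  rw [h, ← map_pow, AdjoinRoot.mk_self]

/-- In `R = ℂ[x]/(x^{N+1})`: each `1 - q^r(1 - x̄)` (for `r ≥ 1`) is invertible, and
`g = Σ_d Q^d ∏_{r=1}^d (1 - q^r(1-x̄))^{-(N+1)} ∈ R[[Q]]` satisfies the q-difference
equation `(Id - (1-x̄)σ_q)^{N+1} g = Q·g`.  (This is the q-difference equation satisfied
by Givental's small non-equivariant K-theoretical J-function of `ℙ^N`, with `P⁻¹ = 1 - x̄`,
after removing the q-character prefactor `P^{-ℓ_q(Q)}`.) -/
theorem stmt10 (N : ℕ) (q : ℂ) (hq0 : 0 < ‖q‖) (hq1 : ‖q‖ < 1) :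
    (∀ r : ℕ, 1 ≤ r →
      IsUnit (1 - algebraMap ℂ (KRing N) (q ^ r) * (1 - xbar N))) ∧
    (fun f : PowerSeries (KRing N) =>
        f - PowerSeries.C (1 - xbar N) *
          PowerSeries.mk fun d => algebraMap ℂ (KRing N) (q ^ d) *
            PowerSeries.coeff d f)^[N + 1]
      (PowerSeries.mk fun d => Ring.inverse
        ((∏ r ∈ Finset.Icc 1 d,
          (1 - algebraMap ℂ (KRing N) (q ^ r) * (1 - xbar N))) ^ (N + 1))) =
    PowerSeries.X *
      PowerSeries.mk fun d => Ring.inverse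
        ((∏ r ∈ Finset.Icc 1 d,
          (1 - algebraMap ℂ (KRing N) (q ^ r) * (1 - xbar N))) ^ (N + 1)) := by
  set R := KRing N with hR
  set A : ℕ → R := fun r => 1 - algebraMap ℂ R (q ^ r) * (1 - xbar N) with hA
  have hunit : ∀ r : ℕ, 1 ≤ r → IsUnit (A r) := by
    intro r hr
    have hq : q ^ r ≠ 1 := by
      intro h
      have h1 : ‖q ^ r‖ = 1 := by rw [h]; simp
      rw [norm_pow] at h1
      have hlt : ‖q‖ ^ r < 1 :=
        pow_lt_one₀ (norm_nonneg q) hq1 (by omega)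
      rw [h1] at hlt; exact lt_irrefl 1 hlt
    have hA' : A r = algebraMap ℂ R (1 - q ^ r) + algebraMap ℂ R (q ^ r) * xbar N := by
      simp only [hA, map_sub, map_one]; ring
    rw [hA']
    have hu : IsUnit (algebraMap ℂ R (1 - q ^ r)) :=
      (isUnit_iff_ne_zero.2 (sub_ne_zero.2 (Ne.symm hq))).map _
    have hn : IsNilpotent (algebraMap ℂ R (q ^ r) * xbar N) :=
      ⟨N + 1, by rw [mul_pow, xbar_pow, mul_zero]⟩
    exact hn.isUnit_add_left_of_commute hu (Commute.all _ _)
  refine ⟨hunit, ?_⟩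
  set g : PowerSeries R := PowerSeries.mk fun d =>
    Ring.inverse ((∏ r ∈ Finset.Icc 1 d, A r) ^ (N + 1)) with hg
  set L : PowerSeries R → PowerSeries R := fun f =>
    f - PowerSeries.C (1 - xbar N) *
      PowerSeries.mk fun d => algebraMap ℂ R (q ^ d) * PowerSeries.coeff d f with hL
  have hLcoeff : ∀ (f : PowerSeries R) (d : ℕ),
      PowerSeries.coeff d (L f) = A d * PowerSeries.coeff d f := by
    intro f d
    have h : L f = f - PowerSeries.C (1 - xbar N) *
        PowerSeries.mk (fun d => algebraMap ℂ R (q ^ d) * PowerSeries.coeff d f) := rfl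
    rw [h, map_sub, PowerSeries.coeff_C_mul, PowerSeries.coeff_mk, hA]
    ring
  have hiter : ∀ (k : ℕ) (f : PowerSeries R) (d : ℕ),
      PowerSeries.coeff d (L^[k] f) = (A d) ^ k * PowerSeries.coeff d f := by
    intro k
    induction k with
    | zero => intro f d; simp
    | succ n ih =>
      intro f d
      rw [Function.iterate_succ_apply', hLcoeff, ih]
      ring
  ext d
  rw [hiter]
  cases d with
  | zero =>
    rw [PowerSeries.coeff_zero_X_mul]
    have hA0 : A 0 = xbar N := by simp [hA]
    simp [hg, hA0, xbar_pow N]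
  | succ n =>
    rw [PowerSeries.coeff_succ_X_mul]
    simp only [hg, PowerSeries.coeff_mk]
    rw [Finset.prod_Icc_succ_top (by omega : 1 ≤ n + 1), mul_pow,
      Ring.mul_inverse_rev, ← mul_assoc,
      Ring.mul_inverse_cancel _ ((hunit (n+1) (by omega)).pow _), one_mul]
end

section
/- Let N ∈ ℕ and let z ∈ ℂ∖{0}. Work in the ring R = ℂ[x]/(x^{N+1}) and in formal power series R[[Q]]. For each r ≥ 1, the element x̄ + rz of R is invertible (its scalar part rz is nonzero). Define g ∈ R[[Q]] whose d-th coefficient is ∏_{r=1}^d (x̄ + rz)^{−(N+1)}. Then g satisfies (x̄·Id + z·D)^{N+1}(g) = Q·g, where the operator is the (N+1)-st iterate of the R-linear endomorphism f ↦ x̄·f + z·D(f) of R[[Q]]. (This is the differential equation (zQ∂_Q)^{N+1}J = QJ satisfied by Givental's small (non-equivariant) cohomological J-function of ℙ^N, rewritten in the cohomology ring H^*(ℙ^N;ℂ) ≅ ℂ[x]/(x^{N+1}) with H = x̄, after removing the prefactor Q^{H/z}.) -/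
open Complex PowerSeries

lemma iter_coeff (N : ℕ) (z : ℂ) (k : ℕ) (f : PowerSeries (KRing N)) (d : ℕ) :
    PowerSeries.coeff d
      ((fun f : PowerSeries (KRing N) =>
        PowerSeries.C (xbar N) * f +
          PowerSeries.C (algebraMap ℂ (KRing N) z) *
            PowerSeries.mk fun d => (d : KRing N) * PowerSeries.coeff d f)^[k] f) =
    (xbar N + algebraMap ℂ (KRing N) ((d : ℂ) * z)) ^ k * PowerSeries.coeff d f := by
  induction k with
  | zero => simp
  | succ k ih =>
    rw [Function.iterate_succ_apply']
    simp only [map_add, PowerSeries.coeff_C_mul, PowerSeries.coeff_mk, ih, map_mul,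
      map_natCast]
    ring

/-- In `R = ℂ[x]/(x^{N+1})`: each `x̄ + rz` (for `r ≥ 1`) is invertible, and
`g = Σ_d Q^d ∏_{r=1}^d (x̄ + rz)^{-(N+1)} ∈ R[[Q]]` satisfies the differential equation
`(x̄·Id + z·D)^{N+1} g = Q·g`, where `D = Q·d/dQ`.  (This is the differential equation
satisfied by Givental's small non-equivariant cohomological J-function of `ℙ^N`, with
`H = x̄`, after removing the prefactor `Q^{H/z}`.) -/
theorem stmt11 (N : ℕ) (z : ℂ) (hz : z ≠ 0) :
    (∀ r : ℕ, 1 ≤ r →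
      IsUnit (xbar N + algebraMap ℂ (KRing N) (r * z))) ∧
    (fun f : PowerSeries (KRing N) =>
        PowerSeries.C (xbar N) * f +
          PowerSeries.C (algebraMap ℂ (KRing N) z) *
            PowerSeries.mk fun d => (d : KRing N) * PowerSeries.coeff d f)^[N + 1]
      (PowerSeries.mk fun d => Ring.inverse
        ((∏ r ∈ Finset.Icc 1 d, (xbar N + algebraMap ℂ (KRing N) (r * z))) ^ (N + 1))) =
    PowerSeries.X *
      PowerSeries.mk fun d => Ring.inverse
        ((∏ r ∈ Finset.Icc 1 d, (xbar N + algebraMap ℂ (KRing N) (r * z))) ^ (N + 1)) := by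
  have hunit : ∀ r : ℕ, 1 ≤ r →
      IsUnit (xbar N + algebraMap ℂ (KRing N) (r * z)) := by
    intro r hr
    have h1 : IsUnit (algebraMap ℂ (KRing N) (r * z)) :=
      IsUnit.map _ (isUnit_iff_ne_zero.mpr
        (mul_ne_zero (Nat.cast_ne_zero.mpr (by omega)) hz))
    exact IsNilpotent.isUnit_add_right_of_commute ⟨N + 1, xbar_pow N⟩ h1 (Commute.all _ _)
  refine ⟨hunit, ?_⟩
  ext d
  rw [iter_coeff]
  cases d with
  | zero =>
    simp [xbar_pow N, zero_pow (Nat.succ_ne_zero N)]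
  | succ n =>
    rw [PowerSeries.coeff_succ_X_mul, PowerSeries.coeff_mk, PowerSeries.coeff_mk,
      Finset.prod_Icc_succ_top (by omega)]
    set u : KRing N := xbar N + algebraMap ℂ (KRing N) ((n + 1 : ℕ) * z) with hu
    set P : KRing N := ∏ r ∈ Finset.Icc 1 n, (xbar N + algebraMap ℂ (KRing N) (r * z)) with hP
    have huu : IsUnit (u ^ (N + 1)) := (hunit (n + 1) (by omega)).pow _
    have h1 : (xbar N + algebraMap ℂ (KRing N) (((n : ℕ) + 1 : ℂ) * z)) = u := by
      rw [hu]; push_cast; ring_nf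
    rw [mul_pow, Ring.mul_inverse_rev, ← mul_assoc]
    rw [Ring.mul_inverse_cancel _ huu, one_mul]
end
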